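/- Let (D, ≺_D, ≻_D, σ) be a braided commutative dendriform algebra with σ² = id. Then U_RB(D) := Ш⁰_σ(S⁺(D))/J_RB, with its induced product ⋄, Rota–Baxter operator P and braiding β, together with the map ρ_D : D → U_RB(D) induced by inclusion of D in degree one, is the braided universal enveloping commutative Rota–Baxter algebra of weight 0 of D: ρ_D is a homomorphism of dendriform algebras (for the dendriform structure x ≺_P y = x⋄P(y), x ≻_P y = P(x)⋄y on U_RB(D)), and for any strongly braided commutative Rota–Baxter algebra (R, P_R, τ) of weight 0 and any homomorphism f : D → R of braided dendriform algebras, there exists a unique homomorphism f̄ : U_RB(D) → R of braided Rota–Baxter algebras with f = f̄ ∘ ρ_D. -/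
import Mathlib

set_option maxHeartbeats 1000000
noncomputable section
open TensorProduct LinearMap

/-- `f ⊗ id` on a triple tensor product. -/
def op12 {k M : Type} [Field k] [AddCommGroup M] [Module k M]
    (f : M ⊗[k] M →ₗ[k] M ⊗[k] M) : (M ⊗[k] M) ⊗[k] M →ₗ[k] (M ⊗[k] M) ⊗[k] M :=
  rTensor M f

/-- `id ⊗ f` on a triple tensor product. -/
def op23 {k M : Type} [Field k] [AddCommGroup M] [Module k M]
    (f : M ⊗[k] M →ₗ[k] M ⊗[k] M) : (M ⊗[k] M) ⊗[k] M →ₗ[k] (M ⊗[k] M) ⊗[k] M :=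
  (TensorProduct.assoc k M M M).symm.toLinearMap ∘ₗ lTensor M f
    ∘ₗ (TensorProduct.assoc k M M M).toLinearMap

/-- `id ⊗ f ⊗ id` on a fourfold tensor product (`f` acting on the middle two factors). -/
def midOp {k M : Type} [Field k] [AddCommGroup M] [Module k M]
    (f : M ⊗[k] M →ₗ[k] M ⊗[k] M) :
    (M ⊗[k] M) ⊗[k] (M ⊗[k] M) →ₗ[k] (M ⊗[k] M) ⊗[k] (M ⊗[k] M) :=
  (TensorProduct.assoc k M M (M ⊗[k] M)).symm.toLinearMap
    ∘ₗ lTensor M (TensorProduct.assoc k M M M).toLinearMap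
    ∘ₗ lTensor M (rTensor M f)
    ∘ₗ lTensor M (TensorProduct.assoc k M M M).symm.toLinearMap
    ∘ₗ (TensorProduct.assoc k M M (M ⊗[k] M)).toLinearMap

/-- a braided commutative (not necessarily unital) algebra. -/
structure BCA (k : Type) [Field k] where
  M : Type
  [acg : AddCommGroup M]
  [mod : Module k M]
  mu : M ⊗[k] M →ₗ[k] M
  tau : M ⊗[k] M →ₗ[k] M ⊗[k] M
  assoc' : mu ∘ₗ LinearMap.rTensor M mu
    = mu ∘ₗ LinearMap.lTensor M mu ∘ₗ (TensorProduct.assoc k M M M).toLinearMap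
  ybe : op12 tau ∘ₗ op23 tau ∘ₗ op12 tau = op23 tau ∘ₗ op12 tau ∘ₗ op23 tau
  braided1 : LinearMap.lTensor M mu ∘ₗ (TensorProduct.assoc k M M M).toLinearMap
      ∘ₗ op12 tau ∘ₗ op23 tau = tau ∘ₗ LinearMap.rTensor M mu
  braided2 : LinearMap.rTensor M mu ∘ₗ op23 tau ∘ₗ op12 tau
    = tau ∘ₗ LinearMap.lTensor M mu ∘ₗ (TensorProduct.assoc k M M M).toLinearMap
  comm : mu ∘ₗ tau = mu

attribute [instance] BCA.acg BCA.mod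

/-- a strongly braided commutative Rota–Baxter algebra of weight 0. -/
structure BCRB (k : Type) [Field k] extends BCA k where
  P : M →ₗ[k] M
  rb : ∀ x y : M, mu (P x ⊗ₜ[k] P y) = P (mu (x ⊗ₜ[k] P y)) + P (mu (P x ⊗ₜ[k] y))
  strongR : tau ∘ₗ LinearMap.rTensor M P = LinearMap.lTensor M P ∘ₗ tau
  strongL : tau ∘ₗ LinearMap.lTensor M P = LinearMap.rTensor M P ∘ₗ tau

/-- homomorphisms of braided algebras. -/
def IsBCAHom {k : Type} [Field k] (A B : BCA k) (f : A.M →ₗ[k] B.M) : Prop :=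
  f ∘ₗ A.mu = B.mu ∘ₗ TensorProduct.map f f
  ∧ B.tau ∘ₗ TensorProduct.map f f = TensorProduct.map f f ∘ₗ A.tau

/-- homomorphisms of braided Rota–Baxter algebras. -/
def IsBCRBHom {k : Type} [Field k] (A B : BCRB k) (f : A.M →ₗ[k] B.M) : Prop :=
  IsBCAHom A.toBCA B.toBCA f ∧ f ∘ₗ A.P = B.P ∘ₗ f

/-- the Rota–Baxter ideal generated by a set. -/
def RBIdeal {k W : Type} [Field k] [AddCommGroup W] [Module k W]
    (mu : W ⊗[k] W →ₗ[k] W) (P : W →ₗ[k] W) (gens : Set W) : Submodule k W :=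
  sInf {J : Submodule k W | gens ⊆ J
    ∧ (∀ x ∈ J, ∀ w : W, mu (x ⊗ₜ[k] w) ∈ J ∧ mu (w ⊗ₜ[k] x) ∈ J)
    ∧ (∀ x ∈ J, P x ∈ J)}

/-- Let `(D, ≺_D, ≻_D, σ)` be a braided commutative dendriform algebra with
`σ² = id`.  Let `A` be the (positive) quantum symmetric algebra `S⁺(D)` — i.e. the free
braided commutative algebra on the braided vector space `D` —, let `W` be the free strongly
braided commutative Rota–Baxter algebra of weight 0 on `A` (i.e. `Ш⁰_σ(S⁺(D))`),
let `J_RB ⊆ W` be the Rota–Baxter ideal generated by `x ≺_D y − x ⋄ P(y)` for `x, y ∈ D`, and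
let `U = W/J_RB` (presented by a surjective braided Rota–Baxter homomorphism `π` with kernel
`J_RB`).  Then `ρ_D := π ∘ ι : D → U` is a homomorphism of dendriform algebras for the
dendriform structure `x ≺_P y = x ⋄ P(y)`, `x ≻_P y = P(x) ⋄ y` on `U`, and `(U, ρ_D)` is the
braided universal enveloping commutative Rota–Baxter algebra of weight 0 of `D`: every
homomorphism `f : D → R` of braided dendriform algebras into a strongly braided commutative
Rota–Baxter algebra `R` of weight 0 factors uniquely through `ρ_D` via a homomorphism of
braided Rota–Baxter algebras. -/
theorem universal_enveloping_braided_RB_of_dendriform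
    {k D : Type} [Field k] [AddCommGroup D] [Module k D]
    (pD sD : D ⊗[k] D →ₗ[k] D)
    (sgD : D ⊗[k] D →ₗ[k] D ⊗[k] D)
    (hybeD : op12 sgD ∘ₗ op23 sgD ∘ₗ op12 sgD = op23 sgD ∘ₗ op12 sgD ∘ₗ op23 sgD)
    (hsymD : sgD ∘ₗ sgD = LinearMap.id)
    (hd1 : ∀ x y z : D, pD (pD (x ⊗ₜ[k] y) ⊗ₜ[k] z)
      = pD (x ⊗ₜ[k] (pD (y ⊗ₜ[k] z) + sD (y ⊗ₜ[k] z))))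
    (hd2 : ∀ x y z : D, pD (sD (x ⊗ₜ[k] y) ⊗ₜ[k] z) = sD (x ⊗ₜ[k] pD (y ⊗ₜ[k] z)))
    (hd3 : ∀ x y z : D, sD (x ⊗ₜ[k] sD (y ⊗ₜ[k] z))
      = sD ((pD (x ⊗ₜ[k] y) + sD (x ⊗ₜ[k] y)) ⊗ₜ[k] z))
    (hc1 : sgD ∘ₗ lTensor D pD ∘ₗ (TensorProduct.assoc k D D D).toLinearMap
        = rTensor D pD ∘ₗ op23 sgD ∘ₗ op12 sgD)
    (hc2 : sgD ∘ₗ rTensor D pD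
        = lTensor D pD ∘ₗ (TensorProduct.assoc k D D D).toLinearMap ∘ₗ op12 sgD ∘ₗ op23 sgD)
    (hc3 : sgD ∘ₗ lTensor D sD ∘ₗ (TensorProduct.assoc k D D D).toLinearMap
        = rTensor D sD ∘ₗ op23 sgD ∘ₗ op12 sgD)
    (hc4 : sgD ∘ₗ rTensor D sD
        = lTensor D sD ∘ₗ (TensorProduct.assoc k D D D).toLinearMap ∘ₗ op12 sgD ∘ₗ op23 sgD)
    (hcommD1 : pD ∘ₗ sgD = sD) (hcommD2 : sD ∘ₗ sgD = pD)
    -- `A = S⁺(D)` : the free braided commutative algebra on the braided vector space `D` :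
    (A : BCA k) (iDA : D →ₗ[k] A.M)
    (hiDA : A.tau ∘ₗ TensorProduct.map iDA iDA = TensorProduct.map iDA iDA ∘ₗ sgD)
    (hAfree : ∀ (B : BCA k) (f : D →ₗ[k] B.M),
      B.tau ∘ₗ TensorProduct.map f f = TensorProduct.map f f ∘ₗ sgD →
      ∃! g : A.M →ₗ[k] B.M, IsBCAHom A B g ∧ g ∘ₗ iDA = f)
    -- `W = Ш⁰_σ(S⁺(D))` : the free strongly braided commutative Rota–Baxter algebra
    -- of weight 0 on `A` :
    (W : BCRB k) (jAW : A.M →ₗ[k] W.M)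
    (hjAW : IsBCAHom A W.toBCA jAW)
    (hWfree : ∀ (R : BCRB k) (φ : A.M →ₗ[k] R.M), IsBCAHom A R.toBCA φ →
      ∃! h : W.M →ₗ[k] R.M, IsBCRBHom W R h ∧ h ∘ₗ jAW = φ) :
    -- `ι : D → W`, the generators and the ideal `J_RB` :
    let iota : D →ₗ[k] W.M := jAW ∘ₗ iDA
    let J : Submodule k W.M := RBIdeal W.mu W.P
      (Set.range (fun xy : D × D =>
        iota (pD (xy.1 ⊗ₜ[k] xy.2)) - W.mu (iota xy.1 ⊗ₜ[k] W.P (iota xy.2))))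
    -- `U = W / J_RB`, with its induced structure :
    ∀ (U : BCRB k) (proj : W.M →ₗ[k] U.M),
      Function.Surjective proj → LinearMap.ker proj = J → IsBCRBHom W U proj →
      let rho : D →ₗ[k] U.M := proj ∘ₗ iota
      -- `ρ_D` is a homomorphism of dendriform algebras :
      ((∀ x y : D, rho (pD (x ⊗ₜ[k] y)) = U.mu (rho x ⊗ₜ[k] U.P (rho y)))
        ∧ (∀ x y : D, rho (sD (x ⊗ₜ[k] y)) = U.mu (U.P (rho x) ⊗ₜ[k] rho y)))
      -- universal property :
      ∧ ∀ (R : BCRB k) (f : D →ₗ[k] R.M),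
          ((∀ x y : D, f (pD (x ⊗ₜ[k] y)) = R.mu (f x ⊗ₜ[k] R.P (f y)))
            ∧ (∀ x y : D, f (sD (x ⊗ₜ[k] y)) = R.mu (R.P (f x) ⊗ₜ[k] f y))
            ∧ R.tau ∘ₗ TensorProduct.map f f = TensorProduct.map f f ∘ₗ sgD) →
          ∃! g : U.M →ₗ[k] R.M, IsBCRBHom U R g ∧ g ∘ₗ rho = f := by

  intro iota J U proj hsurj hker hprojhom rho
  obtain ⟨⟨hpmu, hptau⟩, hpP⟩ := hprojhom
  -- rho intertwines braidings
  have hrho_braid : U.tau ∘ₗ TensorProduct.map rho rho = TensorProduct.map rho rho ∘ₗ sgD := by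
    have h1 : TensorProduct.map rho rho
        = (TensorProduct.map proj proj ∘ₗ TensorProduct.map jAW jAW)
          ∘ₗ TensorProduct.map iDA iDA := by
      rw [← TensorProduct.map_comp, ← TensorProduct.map_comp]; rfl
    calc U.tau ∘ₗ TensorProduct.map rho rho
        = ((U.tau ∘ₗ TensorProduct.map proj proj) ∘ₗ TensorProduct.map jAW jAW)
            ∘ₗ TensorProduct.map iDA iDA := by
          rw [h1]; simp only [LinearMap.comp_assoc]
      _ = ((TensorProduct.map proj proj ∘ₗ W.tau) ∘ₗ TensorProduct.map jAW jAW)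
            ∘ₗ TensorProduct.map iDA iDA := by rw [hptau]
      _ = (TensorProduct.map proj proj ∘ₗ (W.tau ∘ₗ TensorProduct.map jAW jAW))
            ∘ₗ TensorProduct.map iDA iDA := by simp only [LinearMap.comp_assoc]
      _ = (TensorProduct.map proj proj ∘ₗ (TensorProduct.map jAW jAW ∘ₗ A.tau))
            ∘ₗ TensorProduct.map iDA iDA := by rw [hjAW.2]
      _ = (TensorProduct.map proj proj ∘ₗ TensorProduct.map jAW jAW)
            ∘ₗ (A.tau ∘ₗ TensorProduct.map iDA iDA) := by simp only [LinearMap.comp_assoc]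
      _ = (TensorProduct.map proj proj ∘ₗ TensorProduct.map jAW jAW)
            ∘ₗ (TensorProduct.map iDA iDA ∘ₗ sgD) := by rw [hiDA]
      _ = TensorProduct.map rho rho ∘ₗ sgD := by rw [h1]; simp only [LinearMap.comp_assoc]
  -- the generators lie in J
  have hgen : ∀ x y : D,
      iota (pD (x ⊗ₜ[k] y)) - W.mu (iota x ⊗ₜ[k] W.P (iota y)) ∈ J := by
    intro x y
    refine Submodule.mem_sInf.2 fun J' hJ' => hJ'.1 ⟨(x, y), rfl⟩
  -- the "generator map" as a linear map
  set F : D ⊗[k] D →ₗ[k] W.M :=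
    iota ∘ₗ pD - W.mu ∘ₗ TensorProduct.map iota (W.P ∘ₗ iota) with hF
  have hFmem : ∀ t : D ⊗[k] D, F t ∈ J := by
    intro t
    induction t using TensorProduct.induction_on with
    | zero => simpa using (Submodule.zero_mem J)
    | tmul x y => simpa [hF] using hgen x y
    | add a b ha hb => simpa [map_add] using J.add_mem ha hb
  -- part 1 of the dendriform property, as a linear-map identity
  have key1 : rho ∘ₗ pD = U.mu ∘ₗ TensorProduct.map rho (U.P ∘ₗ rho) := by
    have h2 : proj ∘ₗ (iota ∘ₗ pD)
        = proj ∘ₗ (W.mu ∘ₗ TensorProduct.map iota (W.P ∘ₗ iota)) := by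
      apply LinearMap.ext
      intro t
      have h0 : proj (F t) = 0 := by
        have := hFmem t
        rw [← hker] at this
        simpa using this
      simp only [hF, LinearMap.sub_apply, map_sub, LinearMap.comp_apply] at h0 ⊢
      rw [sub_eq_zero] at h0
      exact h0
    calc rho ∘ₗ pD = proj ∘ₗ (iota ∘ₗ pD) := by rw [LinearMap.comp_assoc]
      _ = proj ∘ₗ (W.mu ∘ₗ TensorProduct.map iota (W.P ∘ₗ iota)) := h2
      _ = (proj ∘ₗ W.mu) ∘ₗ TensorProduct.map iota (W.P ∘ₗ iota) := by
          rw [LinearMap.comp_assoc]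
      _ = U.mu ∘ₗ TensorProduct.map proj proj ∘ₗ TensorProduct.map iota (W.P ∘ₗ iota) := by
          rw [hpmu, LinearMap.comp_assoc]
      _ = U.mu ∘ₗ TensorProduct.map rho (U.P ∘ₗ rho) := by
          rw [← TensorProduct.map_comp]
          congr 2
          calc proj ∘ₗ W.P ∘ₗ iota = (proj ∘ₗ W.P) ∘ₗ iota := by rw [LinearMap.comp_assoc]
            _ = (U.P ∘ₗ proj) ∘ₗ iota := by rw [hpP]
            _ = U.P ∘ₗ rho := by rw [LinearMap.comp_assoc]
  have dend1 : ∀ x y : D, rho (pD (x ⊗ₜ[k] y)) = U.mu (rho x ⊗ₜ[k] U.P (rho y)) := by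
    intro x y
    have := LinearMap.congr_fun key1 (x ⊗ₜ[k] y)
    simpa using this
  have hsplit : TensorProduct.map rho (U.P ∘ₗ rho)
      = lTensor U.M U.P ∘ₗ TensorProduct.map rho rho := by
    apply TensorProduct.ext'; intro a b; simp
  have dend2 : ∀ x y : D, rho (sD (x ⊗ₜ[k] y)) = U.mu (U.P (rho x) ⊗ₜ[k] rho y) := by
    intro x y
    have hs : sD (x ⊗ₜ[k] y) = pD (sgD (x ⊗ₜ[k] y)) := by
      have := LinearMap.congr_fun hcommD1 (x ⊗ₜ[k] y); simpa using this.symm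
    rw [hs]
    have h5 := LinearMap.congr_fun key1 (sgD (x ⊗ₜ[k] y))
    simp only [LinearMap.comp_apply] at h5
    rw [h5, LinearMap.congr_fun hsplit (sgD (x ⊗ₜ[k] y))]
    have h6 : TensorProduct.map rho rho (sgD (x ⊗ₜ[k] y))
        = U.tau (rho x ⊗ₜ[k] rho y) := by
      have := LinearMap.congr_fun hrho_braid (x ⊗ₜ[k] y)
      simpa using this.symm
    simp only [LinearMap.comp_apply]
    rw [h6]
    have h7 : lTensor U.M U.P (U.tau (rho x ⊗ₜ[k] rho y))
        = U.tau (U.P (rho x) ⊗ₜ[k] rho y) := by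
      have := LinearMap.congr_fun U.strongR (rho x ⊗ₜ[k] rho y)
      simpa using this.symm
    rw [h7]
    have := LinearMap.congr_fun U.comm (U.P (rho x) ⊗ₜ[k] rho y)
    simpa using this
  refine ⟨⟨dend1, dend2⟩, ?_⟩
  -- universal property
  intro R f ⟨hf1, hf2, hf3⟩
  obtain ⟨φ, ⟨hφhom, hφi⟩, hφuniq⟩ := hAfree R.toBCA f hf3
  obtain ⟨h, ⟨hhhom, hhj⟩, hhuniq⟩ := hWfree R φ hφhom
  obtain ⟨⟨hhmu, hhtau⟩, hhP⟩ := hhhom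
  -- pointwise versions of the structure-map identities
  have Ppmu : ∀ t : W.M ⊗[k] W.M, proj (W.mu t) = U.mu (TensorProduct.map proj proj t) :=
    fun t => by simpa using LinearMap.congr_fun hpmu t
  have Pptau : ∀ t : W.M ⊗[k] W.M,
      U.tau (TensorProduct.map proj proj t) = TensorProduct.map proj proj (W.tau t) :=
    fun t => by simpa using LinearMap.congr_fun hptau t
  have PpP : ∀ w : W.M, proj (W.P w) = U.P (proj w) :=
    fun w => by simpa using LinearMap.congr_fun hpP w
  have Phmu : ∀ t : W.M ⊗[k] W.M, h (W.mu t) = R.mu (TensorProduct.map h h t) :=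
    fun t => by simpa using LinearMap.congr_fun hhmu t
  have Phtau : ∀ t : W.M ⊗[k] W.M,
      R.tau (TensorProduct.map h h t) = TensorProduct.map h h (W.tau t) :=
    fun t => by simpa using LinearMap.congr_fun hhtau t
  have PhP : ∀ w : W.M, h (W.P w) = R.P (h w) :=
    fun w => by simpa using LinearMap.congr_fun hhP w
  have Pjmu : ∀ t : A.M ⊗[k] A.M, jAW (A.mu t) = W.mu (TensorProduct.map jAW jAW t) :=
    fun t => by simpa using LinearMap.congr_fun hjAW.1 t
  have Pjtau : ∀ t : A.M ⊗[k] A.M,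
      W.tau (TensorProduct.map jAW jAW t) = TensorProduct.map jAW jAW (A.tau t) :=
    fun t => by simpa using LinearMap.congr_fun hjAW.2 t
  have hhiota : h ∘ₗ iota = f := by
    calc h ∘ₗ (jAW ∘ₗ iDA) = (h ∘ₗ jAW) ∘ₗ iDA := by rw [← LinearMap.comp_assoc]
      _ = φ ∘ₗ iDA := by rw [hhj]
      _ = f := hφi
  have Phiota : ∀ x : D, h (iota x) = f x := fun x => by
    simpa using LinearMap.congr_fun hhiota x
  -- J ≤ ker h
  have hle : J ≤ LinearMap.ker h := by
    apply sInf_le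
    refine ⟨?_, ?_, ?_⟩
    · rintro _ ⟨⟨x, y⟩, rfl⟩
      simp only [SetLike.mem_coe, LinearMap.mem_ker, map_sub]
      rw [Phiota, Phmu, TensorProduct.map_tmul, PhP, Phiota, Phiota, hf1 x y, sub_self]
    · intro x hx w
      simp only [LinearMap.mem_ker] at hx ⊢
      constructor
      · rw [Phmu, TensorProduct.map_tmul, hx, TensorProduct.zero_tmul, map_zero]
      · rw [Phmu, TensorProduct.map_tmul, hx, TensorProduct.tmul_zero, map_zero]
    · intro x hx
      simp only [LinearMap.mem_ker] at hx ⊢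
      rw [PhP, hx, map_zero]
  have hle' : LinearMap.ker proj ≤ LinearMap.ker h := by rw [hker]; exact hle
  -- construct g
  have hex : ∃ g : U.M →ₗ[k] R.M, g ∘ₗ proj = h := by
    refine ⟨((LinearMap.ker proj).liftQ h hle') ∘ₗ
      (proj.quotKerEquivOfSurjective hsurj).symm.toLinearMap, ?_⟩
    apply LinearMap.ext
    intro w
    have hem : (proj.quotKerEquivOfSurjective hsurj) (Submodule.Quotient.mk w) = proj w := rfl
    have hsy : (proj.quotKerEquivOfSurjective hsurj).symm (proj w)
        = Submodule.Quotient.mk w := by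
      rw [LinearEquiv.symm_apply_eq, hem]
    simp only [LinearMap.comp_apply, LinearEquiv.coe_coe, hsy]
    exact Submodule.liftQ_apply _ _ _
  obtain ⟨g, hgproj⟩ := hex
  have egproj : ∀ w : W.M, g (proj w) = h w := fun w => by
    simpa using LinearMap.congr_fun hgproj w
  have hsurj2 : Function.Surjective (TensorProduct.map proj proj) :=
    TensorProduct.map_surjective hsurj hsurj
  have mgh : TensorProduct.map g g ∘ₗ TensorProduct.map proj proj = TensorProduct.map h h := by
    rw [← TensorProduct.map_comp, hgproj]
  have Pmgh : ∀ t : W.M ⊗[k] W.M,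
      TensorProduct.map g g (TensorProduct.map proj proj t) = TensorProduct.map h h t :=
    fun t => by simpa using LinearMap.congr_fun mgh t
  have hgmu : g ∘ₗ U.mu = R.mu ∘ₗ TensorProduct.map g g := by
    rw [← LinearMap.cancel_right hsurj2]
    apply LinearMap.ext
    intro t
    simp only [LinearMap.comp_apply]
    rw [← Ppmu t, egproj, Phmu, ← Pmgh t]
  have hgtau : R.tau ∘ₗ TensorProduct.map g g = TensorProduct.map g g ∘ₗ U.tau := by
    rw [← LinearMap.cancel_right hsurj2]
    apply LinearMap.ext
    intro t
    simp only [LinearMap.comp_apply]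
    rw [Pmgh t, Phtau, ← Pmgh (W.tau t), Pptau]
  have hgP : g ∘ₗ U.P = R.P ∘ₗ g := by
    rw [← LinearMap.cancel_right hsurj]
    apply LinearMap.ext
    intro w
    simp only [LinearMap.comp_apply]
    rw [← PpP, egproj, egproj, PhP]
  have hgrho : g ∘ₗ rho = f := by
    apply LinearMap.ext
    intro x
    simp only [LinearMap.comp_apply]
    exact (egproj (iota x)).trans (Phiota x)
  refine ⟨g, ⟨⟨⟨hgmu, hgtau⟩, hgP⟩, hgrho⟩, ?_⟩
  -- uniqueness
  rintro g' ⟨⟨⟨hg'mu, hg'tau⟩, hg'P⟩, hg'rho⟩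
  have Pg'mu : ∀ t : U.M ⊗[k] U.M, g' (U.mu t) = R.mu (TensorProduct.map g' g' t) :=
    fun t => by simpa using LinearMap.congr_fun hg'mu t
  have Pg'tau : ∀ t : U.M ⊗[k] U.M,
      R.tau (TensorProduct.map g' g' t) = TensorProduct.map g' g' (U.tau t) :=
    fun t => by simpa using LinearMap.congr_fun hg'tau t
  have Pg'P : ∀ u : U.M, g' (U.P u) = R.P (g' u) :=
    fun u => by simpa using LinearMap.congr_fun hg'P u
  have mg' : ∀ t : W.M ⊗[k] W.M,
      TensorProduct.map (g' ∘ₗ proj) (g' ∘ₗ proj) t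
        = TensorProduct.map g' g' (TensorProduct.map proj proj t) := by
    intro t
    rw [TensorProduct.map_comp]
    rfl
  have hstep : g' ∘ₗ proj = h := by
    apply hhuniq
    refine ⟨⟨⟨?_, ?_⟩, ?_⟩, ?_⟩
    · apply LinearMap.ext
      intro t
      simp only [LinearMap.comp_apply]
      rw [Ppmu, Pg'mu, mg' t]
    · apply LinearMap.ext
      intro t
      simp only [LinearMap.comp_apply]
      rw [mg' t, Pg'tau, Pptau, mg' (W.tau t)]
    · apply LinearMap.ext
      intro w
      simp only [LinearMap.comp_apply]
      rw [PpP, Pg'P]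
    · -- (g' ∘ proj) ∘ jAW = φ
      apply hφuniq
      have mc : ∀ t : A.M ⊗[k] A.M,
          TensorProduct.map ((g' ∘ₗ proj) ∘ₗ jAW) ((g' ∘ₗ proj) ∘ₗ jAW) t
            = TensorProduct.map g' g' (TensorProduct.map proj proj
                (TensorProduct.map jAW jAW t)) := by
        intro t
        rw [TensorProduct.map_comp, TensorProduct.map_comp]
        rfl
      refine ⟨⟨?_, ?_⟩, ?_⟩
      · apply LinearMap.ext
        intro t
        simp only [LinearMap.comp_apply]
        rw [Pjmu, Ppmu, Pg'mu, mc t]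
      · apply LinearMap.ext
        intro t
        simp only [LinearMap.comp_apply]
        rw [mc t, Pg'tau, Pptau, Pjtau, mc (A.tau t)]
      · apply LinearMap.ext
        intro x
        simp only [LinearMap.comp_apply]
        exact LinearMap.congr_fun hg'rho x
  have hfin : g' ∘ₗ proj = g ∘ₗ proj := by rw [hstep, hgproj]
  exact (LinearMap.cancel_right hsurj).1 hfin
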